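/- Let Z = (Z_1,...,Z_n) be independent random variables and let Z' be obtained by choosing i uniformly from [n] and resampling Z_i independently. Then for α ∈ ℕⁿ with α ≠ 0, the centered monomial χ_α(Z) = ∏_{i: α_i>0}(Z_i^{α_i} − E[Z_i^{α_i}]) satisfies E[χ_α(Z) − χ_α(Z') | Z] = (|α|_0/n) · χ_α(Z), where |α|_0 is the number of nonzero entries of α. -/

import Mathlib

open MeasureTheory

theorem centered_monomial_eigenvector
    {n : ℕ} (hn : 0 < n) (μ : Fin n → Measure ℝ)
    [∀ i, IsProbabilityMeasure (μ i)]
    (α : Fin n → ℕ) (hα : α ≠ 0)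
    (hint : ∀ i k, Integrable (fun x : ℝ => x ^ k) (μ i))
    (m : Fin n → ℝ) (hm : ∀ i, m i = ∫ x, x ^ α i ∂(μ i))
    (χ : (Fin n → ℝ) → ℝ)
    (hχ : ∀ z, χ z = ∏ i ∈ Finset.univ.filter (fun i => 0 < α i), (z i ^ α i - m i))
    (z : Fin n → ℝ) :
    (1 / n : ℝ) * ∑ i, (χ z - ∫ x, χ (Function.update z i x) ∂(μ i))
      = (((Finset.univ.filter (fun i => 0 < α i)).card : ℝ) / n) * χ z := by
  have key : ∀ i, ∫ x, χ (Function.update z i x) ∂(μ i)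
      = if 0 < α i then 0 else χ z := by
    intro i
    by_cases hi : 0 < α i
    · have hiS : i ∈ Finset.univ.filter (fun i => 0 < α i) := by simp [hi]
      have heq : ∀ x : ℝ, χ (Function.update z i x)
          = (x ^ α i - m i) * ∏ j ∈ (Finset.univ.filter (fun i => 0 < α i)).erase i,
              (z j ^ α j - m j) := by
        intro x
        rw [hχ, ← Finset.mul_prod_erase _ _ hiS, Function.update_self]
        congr 1
        refine Finset.prod_congr rfl fun j hj => ?_
        rw [Function.update_of_ne (Finset.ne_of_mem_erase hj)]
      simp_rw [heq]
      rw [MeasureTheory.integral_mul_const]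
      have hz : ∫ x, (x ^ α i - m i) ∂(μ i) = 0 := by
        rw [integral_sub (hint i (α i)) (integrable_const _), integral_const]
        simp [hm i]
      rw [hz, zero_mul, if_pos hi]
    · have heq : ∀ x : ℝ, χ (Function.update z i x) = χ z := by
        intro x
        rw [hχ, hχ]
        refine Finset.prod_congr rfl fun j hj => ?_
        have hji : j ≠ i := by
          rintro rfl; exact hi (Finset.mem_filter.mp hj).2
        rw [Function.update_of_ne hji]
      simp_rw [heq]
      simp [hi]
  have hsum : ∑ i, (χ z - ∫ x, χ (Function.update z i x) ∂(μ i))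
      = ((Finset.univ.filter (fun i => 0 < α i)).card : ℝ) * χ z := by
    have h1 : ∀ i, χ z - (if 0 < α i then 0 else χ z)
        = if 0 < α i then χ z else 0 := by
      intro i; split <;> ring
    simp_rw [key, h1]
    rw [Finset.sum_ite, Finset.sum_const, Finset.sum_const, nsmul_eq_mul, smul_zero, add_zero]
  rw [hsum]; ring
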